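/- Let n ≥ 1 and let F be an upset of a De Morgan lattice L. Then F is a complete prime n-filter on L if and only if there exist k with 1 ≤ k ≤ n and a family G : Fin k → Set L such that each G i is a complete prime filter on L and F = ⋃ i, G i. -/
import Mathlib


/-- A De Morgan lattice: a distributive lattice with an antitone involution. -/
class DeMorgan (L : Type*) extends DistribLattice L where
  dneg : L → L
  dneg_dneg : ∀ x : L, dneg (dneg x) = x
  dneg_sup : ∀ x y : L, dneg (x ⊔ y) = dneg x ⊓ dneg y

prefix:max "∼" => DeMorgan.dneg

section Defs

variable {α : Type*}

/-- An upward closed subset of a lattice. -/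
def IsUpset [Lattice α] (F : Set α) : Prop :=
  ∀ ⦃x y : α⦄, x ∈ F → x ≤ y → y ∈ F

/-- A lattice filter: an upset closed under binary meets. -/
def IsLatFilter [Lattice α] (F : Set α) : Prop :=
  IsUpset F ∧ ∀ x y : α, x ∈ F → y ∈ F → x ⊓ y ∈ F

/-- An `n`-filter: an upset such that for every nonempty finite `Y`, if the meet of
every nonempty subset of `Y` of size at most `n` lies in `F`, then so does the meet of `Y`. -/
def IsNFilter [Lattice α] (n : ℕ) (F : Set α) : Prop :=
  IsUpset F ∧ ∀ (Y : Finset α) (hY : Y.Nonempty),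
    (∀ (X : Finset α) (hX : X.Nonempty), X ⊆ Y → X.card ≤ n → X.inf' hX id ∈ F) →
    Y.inf' hY id ∈ F

/-- A prime upset: `x ⊔ y ∈ F` implies `x ∈ F` or `y ∈ F`. -/
def IsPrimeUpset [Lattice α] (F : Set α) : Prop :=
  ∀ x y : α, x ⊔ y ∈ F → x ∈ F ∨ y ∈ F

/-- A downward closed subset of a lattice. -/
def IsDownset [Lattice α] (I : Set α) : Prop :=
  ∀ ⦃x y : α⦄, x ∈ I → y ≤ x → y ∈ I

/-- A lattice ideal: a downset closed under binary joins. -/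
def IsIdeal [Lattice α] (I : Set α) : Prop :=
  IsDownset I ∧ ∀ x y : α, x ∈ I → y ∈ I → x ⊔ y ∈ I

/-- An `n`-ideal: the order dual notion of an `n`-filter. -/
def IsNIdeal [Lattice α] (n : ℕ) (I : Set α) : Prop :=
  IsDownset I ∧ ∀ (Y : Finset α) (hY : Y.Nonempty),
    (∀ (X : Finset α) (hX : X.Nonempty), X ⊆ Y → X.card ≤ n → X.sup' hX id ∈ I) →
    Y.sup' hY id ∈ I

variable {L : Type*} [DeMorgan L]

/-- Almost complete upset: `x ∈ F` implies `x ⊓ (y ⊔ ∼y) ∈ F`. -/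
def AlmostComplete (F : Set L) : Prop := ∀ x ∈ F, ∀ y : L, x ⊓ (y ⊔ ∼y) ∈ F

/-- Complete upset: almost complete and nonempty. -/
def IsCompleteUpset (F : Set L) : Prop := AlmostComplete F ∧ F.Nonempty

/-- Almost consistent upset: `(x ⊓ ∼x) ⊔ y ∈ F` implies `y ∈ F`. -/
def AlmostConsistent (F : Set L) : Prop := ∀ x y : L, (x ⊓ ∼x) ⊔ y ∈ F → y ∈ F

/-- Consistent upset: almost consistent and not total. -/
def IsConsistentUpset (F : Set L) : Prop := AlmostConsistent F ∧ F ≠ Set.univ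

/-- Classical upset: complete and consistent. -/
def IsClassicalUpset (F : Set L) : Prop := IsCompleteUpset F ∧ IsConsistentUpset F

/-- Kalman upset. -/
def IsKalmanUpset (F : Set L) : Prop :=
  ∀ x y z u : L, ((x ⊓ ∼x) ⊓ z) ⊔ u ∈ F → ((y ⊔ ∼y) ⊓ z) ⊔ u ∈ F

/-- A homomorphism of De Morgan lattices. -/
def IsDMHom {L M : Type*} [DeMorgan L] [DeMorgan M] (h : L → M) : Prop :=
  (∀ x y : L, h (x ⊓ y) = h x ⊓ h y) ∧ (∀ x y : L, h (x ⊔ y) = h x ⊔ h y) ∧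
    ∀ x : L, h (∼x) = ∼(h x)

/-- The filter generated by all elements of the form `x ⊔ ∼x`. -/
def Fcomp (L : Type*) [DeMorgan L] : Set L :=
  {a | ∃ (s : Finset L) (hs : s.Nonempty), s.inf' hs (fun x => x ⊔ ∼x) ≤ a}

/-- The `n`-filter generated by a set. -/
def nFilterGen (n : ℕ) (U : Set L) : Set L :=
  ⋂₀ {F : Set L | IsNFilter n F ∧ U ⊆ F}

/-- `Comp U`. -/
def CompCl (U : Set L) : Set L := {x | ∃ a ∈ U, ∃ f ∈ Fcomp L, a ⊓ f ≤ x}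

/-- `Cons U`. -/
def ConsCl (U : Set L) : Set L := {x | ∃ f ∈ Fcomp L, ∼f ⊔ x ∈ U}

/-- A congruence of De Morgan lattices, as a binary relation. -/
def IsCongruence (θ : L → L → Prop) : Prop :=
  Equivalence θ ∧
  (∀ a b c d : L, θ a b → θ c d → θ (a ⊓ c) (b ⊓ d)) ∧
  (∀ a b c d : L, θ a b → θ c d → θ (a ⊔ c) (b ⊔ d)) ∧
  ∀ a b : L, θ a b → θ (∼a) (∼b)

end Defs

/-- The four-element De Morgan lattice `DM₁` on `Bool × Bool`. -/
instance : DeMorgan (Bool × Bool) :=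
  { (inferInstance : DistribLattice (Bool × Bool)) with
    dneg := fun p => (!p.2, !p.1)
    dneg_dneg := by decide
    dneg_sup := by decide }

/-- Powers of `DM₁`, with componentwise operations. -/
instance {ι : Type*} : DeMorgan (ι → Bool × Bool) :=
  { (inferInstance : DistribLattice (ι → Bool × Bool)) with
    dneg := fun f i => ∼(f i)
    dneg_dneg := fun f => funext fun i => DeMorgan.dneg_dneg (f i)
    dneg_sup := fun f g => funext fun i => DeMorgan.dneg_sup (f i) (g i) }

section ProofAux

variable {α : Type*} [DistribLattice α]

private lemma prime_sup'_mem {F : Set α} (hp : IsPrimeUpset F) {β : Type*} :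
    ∀ (s : Finset β) (hs : s.Nonempty) (f : β → α), s.sup' hs f ∈ F → ∃ b ∈ s, f b ∈ F := by
  intro s
  induction s using Finset.cons_induction with
  | empty => intro hs; exact absurd hs (by simp)
  | cons b t hbt ih =>
    intro hs f h
    rcases t.eq_empty_or_nonempty with rfl | ht
    · refine ⟨b, by simp, ?_⟩
      have : (Finset.cons b ∅ hbt).sup' hs f = f b := by simp
      rwa [this] at h
    · rw [Finset.sup'_cons ht] at h
      rcases hp _ _ h with h' | h'
      · exact ⟨b, by simp, h'⟩
      · obtain ⟨c, hc, hfc⟩ := ih ht f h'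
        exact ⟨c, by simp [hc], hfc⟩

private lemma filter_inf'_mem {G : Set α} (hG : IsLatFilter G) :
    ∀ (s : Finset α) (hs : s.Nonempty), (∀ x ∈ s, x ∈ G) → s.inf' hs id ∈ G := by
  intro s
  induction s using Finset.cons_induction with
  | empty => intro hs; exact absurd hs (by simp)
  | cons b t hbt ih =>
    intro hs h
    rcases t.eq_empty_or_nonempty with rfl | ht
    · have : (Finset.cons b ∅ hbt).inf' hs id = b := by simp
      rw [this]; exact h b (by simp)
    · rw [Finset.inf'_cons ht]
      exact hG.2 _ _ (h b (by simp)) (ih ht fun x hx => h x (by simp [hx]))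

/-- Key combinatorial lemma: in a prime `m`-filter, among any `m+1` elements some
pair has its meet in the filter. -/
private lemma exists_compat_pair {F : Set α} {m : ℕ} (hm : 1 ≤ m) (hup : IsUpset F)
    (hp : IsPrimeUpset F) (hnf : IsNFilter m F) (a : Fin (m + 1) → α) (ha : ∀ i, a i ∈ F) :
    ∃ p q : Fin (m + 1), p ≠ q ∧ a p ⊓ a q ∈ F := by
  classical
  have huniv : (Finset.univ : Finset (Fin (m + 1))).Nonempty := Finset.univ_nonempty
  have herase : ∀ i : Fin (m + 1), (Finset.univ.erase i).Nonempty := by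
    intro i
    rw [← Finset.card_pos, Finset.card_erase_of_mem (Finset.mem_univ i)]
    simp only [Finset.card_univ, Fintype.card_fin]
    omega
  set e : Fin (m + 1) → α := fun i => (Finset.univ.erase i).sup' (herase i) a with he
  have hae : ∀ i j : Fin (m + 1), i ≠ j → a i ≤ e j := by
    intro i j hij
    exact Finset.le_sup' a (Finset.mem_erase.mpr ⟨hij, Finset.mem_univ i⟩)
  have i0 : Fin (m + 1) := ⟨0, by omega⟩
  have h01 : (⟨0, by omega⟩ : Fin (m + 1)) ≠ ⟨1, by omega⟩ := by
    simp [Fin.ext_iff]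
  set p0 : Fin (m + 1) := ⟨0, by omega⟩ with hp0
  set p1 : Fin (m + 1) := ⟨1, by omega⟩ with hp1
  have hod : (Finset.univ.offDiag : Finset (Fin (m + 1) × Fin (m + 1))).Nonempty :=
    ⟨(p0, p1), Finset.mem_offDiag.mpr ⟨Finset.mem_univ _, Finset.mem_univ _, h01⟩⟩
  set S : α := Finset.univ.offDiag.sup' hod (fun p => a p.1 ⊓ a p.2) with hS
  have hpair : ∀ p q : Fin (m + 1), p ≠ q → a p ⊓ a q ≤ S := by
    intro p q h
    have hmempq : (p, q) ∈ (Finset.univ.offDiag : Finset (Fin (m + 1) × Fin (m + 1))) :=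
      Finset.mem_offDiag.mpr ⟨Finset.mem_univ _, Finset.mem_univ _, h⟩
    exact Finset.le_sup' (fun r : Fin (m + 1) × Fin (m + 1) => a r.1 ⊓ a r.2) hmempq
  have hea : ∀ i, e i ⊓ a i ≤ S := by
    intro i
    rw [he]
    rw [Finset.sup'_inf_distrib_right (herase i) a (a i)]
    exact Finset.sup'_le _ _ fun j hj => hpair j i (Finset.mem_erase.mp hj).1
  -- Claim A : the meet of the e i lies in F
  have hinfE : Finset.univ.inf' huniv e ∈ F := by
    by_cases hinj : Function.Injective e
    · have hYne : (Finset.univ.image e).Nonempty := huniv.image e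
      have hcard : (Finset.univ.image e).card = m + 1 := by
        rw [Finset.card_image_of_injective _ hinj, Finset.card_univ, Fintype.card_fin]
      have hmem : (Finset.univ.image e).inf' hYne id ∈ F := by
        apply hnf.2
        intro X hX hXsub hXcard
        have hssub : ∃ v ∈ Finset.univ.image e, v ∉ X := by
          by_contra hcon
          push_neg at hcon
          have := Finset.card_le_card fun v hv => hcon v hv
          omega
        obtain ⟨v, hvmem, hvnot⟩ := hssub
        obtain ⟨i, -, rfl⟩ := Finset.mem_image.mp hvmem
        refine hup (ha i) (Finset.le_inf' _ _ fun x hx => ?_)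
        obtain ⟨l, -, rfl⟩ := Finset.mem_image.mp (hXsub hx)
        have hli : l ≠ i := fun h => hvnot (h ▸ hx)
        exact hae i l (Ne.symm hli)
      have heq : (Finset.univ.image e).inf' hYne id = Finset.univ.inf' huniv e := by
        apply le_antisymm
        · exact Finset.le_inf' _ _ fun i _ =>
            Finset.inf'_le id (Finset.mem_image_of_mem e (Finset.mem_univ i))
        · refine Finset.le_inf' _ _ fun x hx => ?_
          obtain ⟨i, -, rfl⟩ := Finset.mem_image.mp hx
          exact Finset.inf'_le e (Finset.mem_univ i)
      rwa [heq] at hmem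
    · rw [Function.not_injective_iff] at hinj
      obtain ⟨i, j, heij, hij⟩ := hinj
      refine hup (ha i) (Finset.le_inf' _ _ fun l _ => ?_)
      by_cases hl : l = i
      · subst hl; rw [heij]; exact hae l j hij
      · exact hae i l (Ne.symm hl)
  -- Claim B : the meet of the e i is below S
  have key : ∀ (T : Finset (Fin (m + 1))) (hT : T.Nonempty) (hc : Tᶜ.Nonempty),
      T.inf' hT e ≤ S ⊔ Tᶜ.sup' hc a := by
    intro T hT
    induction hT using Finset.Nonempty.cons_induction with
    | singleton b =>
      intro hc
      rw [Finset.inf'_singleton, he]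
      refine Finset.sup'_le _ _ fun x hx => ?_
      refine le_sup_of_le_right (Finset.le_sup' a ?_)
      rw [Finset.mem_compl, Finset.mem_singleton]
      exact (Finset.mem_erase.mp hx).1
    | cons b T hbT hT ih =>
      intro hc
      have hTc : Tᶜ.Nonempty := ⟨b, Finset.mem_compl.mpr hbT⟩
      rw [Finset.inf'_cons hT]
      have h2 := ih hTc
      have h3 : Tᶜ.sup' hTc a ≤ a b ⊔ (Finset.cons b T hbT)ᶜ.sup' hc a := by
        refine Finset.sup'_le _ _ fun x hx => ?_
        by_cases hxb : x = b
        · subst hxb; exact le_sup_left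
        · refine le_sup_of_le_right (Finset.le_sup' a ?_)
          rw [Finset.mem_compl, Finset.mem_cons]
          push_neg
          exact ⟨hxb, Finset.mem_compl.mp hx⟩
      calc e b ⊓ T.inf' hT e
          ≤ e b ⊓ (S ⊔ (a b ⊔ (Finset.cons b T hbT)ᶜ.sup' hc a)) :=
            inf_le_inf_left _ (h2.trans (sup_le_sup_left h3 _))
        _ = (e b ⊓ S) ⊔ ((e b ⊓ a b) ⊔ (e b ⊓ (Finset.cons b T hbT)ᶜ.sup' hc a)) := by
            rw [inf_sup_left, inf_sup_left]
        _ ≤ S ⊔ (Finset.cons b T hbT)ᶜ.sup' hc a := by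
            refine sup_le (le_sup_of_le_left inf_le_right)
              (sup_le (le_sup_of_le_left (hea b)) (le_sup_of_le_right inf_le_right))
  have hBS : Finset.univ.inf' huniv e ≤ S := by
    have hcne : ((Finset.univ.erase p0)ᶜ : Finset (Fin (m + 1))).Nonempty :=
      ⟨p0, by simp⟩
    have h2 := key _ (herase p0) hcne
    have h3 : ((Finset.univ.erase p0)ᶜ).sup' hcne a ≤ a p0 := by
      refine Finset.sup'_le _ _ fun x hx => ?_
      have hx' := Finset.mem_compl.mp hx
      have : x = p0 := by
        by_contra hne
        exact hx' (Finset.mem_erase.mpr ⟨hne, Finset.mem_univ x⟩)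
      exact this ▸ le_rfl
    have h1 : Finset.univ.inf' huniv e ≤ (Finset.univ.erase p0).inf' (herase p0) e :=
      Finset.le_inf' _ _ fun x _ => Finset.inf'_le e (Finset.mem_univ x)
    have h4 : e p0 ⊓ (S ⊔ a p0) ≤ S := by
      rw [inf_sup_left]
      exact sup_le inf_le_right (hea p0)
    have h5 : Finset.univ.inf' huniv e ≤ e p0 ⊓ (S ⊔ a p0) :=
      le_inf (Finset.inf'_le e (Finset.mem_univ p0))
        (h1.trans (h2.trans (sup_le_sup_left h3 S)))
    exact h5.trans h4
  have hSF : S ∈ F := hup hinfE hBS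
  obtain ⟨pq, hpqmem, hpqF⟩ := prime_sup'_mem hp _ hod _ hSF
  obtain ⟨-, -, hne⟩ := Finset.mem_offDiag.mp hpqmem
  exact ⟨pq.1, pq.2, hne, hpqF⟩

end ProofAux

private lemma forward_statement {L : Type*} [DeMorgan L] :
    ∀ n : ℕ, 1 ≤ n → ∀ F : Set L, IsUpset F → IsCompleteUpset F → IsPrimeUpset F →
      IsNFilter n F →
      ∃ k : ℕ, 1 ≤ k ∧ k ≤ n ∧ ∃ G : Fin k → Set L,
        (∀ i : Fin k, IsCompleteUpset (G i) ∧ IsPrimeUpset (G i) ∧ IsLatFilter (G i)) ∧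
        F = ⋃ i : Fin k, G i := by
  intro n hn
  induction n, hn using Nat.le_induction with
  | base =>
    intro F hF hc hp hnf
    classical
    refine ⟨1, le_rfl, le_rfl, fun _ => F, fun _ => ⟨hc, hp, hF, ?_⟩, ?_⟩
    · intro x y hx hy
      have key : ({x, y} : Finset L).inf' ⟨x, Finset.mem_insert_self x {y}⟩ id ∈ F := by
        apply hnf.2
        intro X hX hXsub hXcard
        have hcard1 : X.card = 1 := le_antisymm hXcard hX.card_pos
        obtain ⟨z, rfl⟩ := Finset.card_eq_one.mp hcard1
        rw [Finset.inf'_singleton]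
        have hz := hXsub (Finset.mem_singleton_self z)
        rcases Finset.mem_insert.mp hz with rfl | hz'
        · exact hx
        · rw [Finset.mem_singleton.mp hz']; exact hy
      have heq : ({x, y} : Finset L).inf' ⟨x, Finset.mem_insert_self x {y}⟩ id = x ⊓ y := by
        apply le_antisymm
        · exact le_inf (Finset.inf'_le id (by simp)) (Finset.inf'_le id (by simp))
        · refine Finset.le_inf' _ _ fun z hz => ?_
          rcases Finset.mem_insert.mp hz with rfl | hz'
          · exact inf_le_left
          · rw [Finset.mem_singleton.mp hz']; exact inf_le_right
      exact heq ▸ key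
    · exact (Set.iUnion_const F).symm
  | succ n hn ih =>
    intro F hF hc hp hnf
    by_cases hnf' : IsNFilter n F
    · obtain ⟨k, h1, h2, G, hG, hFeq⟩ := ih F hF hc hp hnf'
      exact ⟨k, h1, h2.trans (Nat.le_succ n), G, hG, hFeq⟩
    classical
    have hnot : ¬ ∀ (Y : Finset L) (hY : Y.Nonempty),
        (∀ (X : Finset L) (hX : X.Nonempty), X ⊆ Y → X.card ≤ n → X.inf' hX id ∈ F) →
        Y.inf' hY id ∈ F := fun h => hnf' ⟨hF, h⟩
    push_neg at hnot
    obtain ⟨Y₀, hY₀ne, hY₀good, hY₀bad⟩ := hnot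
    have hPex : ∃ k, ∃ (Z : Finset L) (hZ : Z.Nonempty),
        Z ⊆ Y₀ ∧ Z.card ≤ k ∧ Z.inf' hZ id ∉ F :=
      ⟨Y₀.card, Y₀, hY₀ne, Finset.Subset.refl _, le_rfl, hY₀bad⟩
    obtain ⟨Z, hZne, hZsub, hZcard, hZbad⟩ := Nat.find_spec hPex
    have hmin : ∀ (W : Finset L) (hW : W.Nonempty), W ⊆ Y₀ → W.card < Nat.find hPex →
        W.inf' hW id ∈ F := by
      intro W hW hsub hcard
      by_contra hbad
      exact Nat.find_min hPex hcard ⟨W, hW, hsub, le_rfl, hbad⟩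
    have hZcard_eq : Z.card = Nat.find hPex := by
      refine le_antisymm hZcard ?_
      by_contra hlt
      push_neg at hlt
      exact hZbad (hmin Z hZne hZsub hlt)
    have hfind_ge : n + 1 ≤ Nat.find hPex := by
      by_contra h
      push_neg at h
      exact hZbad (hY₀good Z hZne hZsub (by omega))
    have hfind_le : Nat.find hPex ≤ n + 1 := by
      by_contra h
      push_neg at h
      refine hZbad (hnf.2 Z hZne ?_)
      intro X hX hXsub hXcard
      exact hmin X hX (hXsub.trans hZsub) (by omega)
    have hZc : Z.card = n + 1 := by omega
    have hZc' : n + 1 = Z.card := hZc.symm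
    -- enumerate Z
    have hcex : ∃ c : Fin (n + 1) → L, Function.Injective c ∧ ∀ i, c i ∈ Z := by
      refine ⟨fun i => (Z.equivFin.symm (Fin.cast hZc' i) : L), ?_, ?_⟩
      · intro i j h
        have h2 : Z.equivFin.symm (Fin.cast hZc' i) = Z.equivFin.symm (Fin.cast hZc' j) :=
          Subtype.ext h
        have h3 := Z.equivFin.symm.injective h2
        have h4 := congrArg Fin.val h3
        simpa [Fin.ext_iff] using h4
      · intro i
        exact (Z.equivFin.symm (Fin.cast hZc' i)).2
    obtain ⟨c, hcinj, hcmem⟩ := hcex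
    have herZ : ∀ i : Fin (n + 1), (Z.erase (c i)).Nonempty := by
      intro i
      rw [← Finset.card_pos, Finset.card_erase_of_mem (hcmem i), hZc]
      omega
    -- the family d
    have hdex : ∃ d : Fin (n + 1) → L, (∀ i, d i ∈ F) ∧
        ∀ p q : Fin (n + 1), p ≠ q → d p ⊓ d q ∉ F := by
      refine ⟨fun i => (Z.erase (c i)).inf' (herZ i) id, fun i => ?_, fun p q hpq hmem => ?_⟩
      · show (Z.erase (c i)).inf' (herZ i) id ∈ F
        refine hmin _ (herZ i) ((Finset.erase_subset _ _).trans hZsub) ?_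
        rw [Finset.card_erase_of_mem (hcmem i)]
        omega
      · refine hZbad (hF hmem ?_)
        refine Finset.le_inf' _ _ fun z hz => ?_
        by_cases hzp : z = c p
        · refine inf_le_right.trans ?_
          refine (Finset.inf'_le id (Finset.mem_erase.mpr ⟨?_, hz⟩) :
            (Z.erase (c q)).inf' (herZ q) id ≤ id z)
          rw [hzp]
          exact fun h => hpq (hcinj h)
        · exact inf_le_left.trans
            (Finset.inf'_le id (Finset.mem_erase.mpr ⟨hzp, hz⟩) :
              (Z.erase (c p)).inf' (herZ p) id ≤ id z)
    obtain ⟨d, hdF, hdd⟩ := hdex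
    -- the compatibility lemma specialized
    have hL1 : ∀ (a : Fin (n + 2) → L), (∀ i, a i ∈ F) →
        ∃ p q : Fin (n + 2), p ≠ q ∧ a p ⊓ a q ∈ F := fun a ha =>
      exists_compat_pair (m := n + 1) (by omega) hF hp hnf a ha
    -- cover
    have hcover : ∀ x ∈ F, ∃ i : Fin (n + 1), x ⊓ d i ∈ F := by
      intro x hx
      have ha : ∀ i : Fin (n + 2), Fin.cases x d i ∈ F := by
        intro i
        rcases Fin.eq_zero_or_eq_succ i with rfl | ⟨j, rfl⟩
        · simp only [Fin.cases_zero]; exact hx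
        · simp only [Fin.cases_succ]; exact hdF j
      obtain ⟨p, q, hpq, hmem⟩ := hL1 (Fin.cases x d) ha
      rcases Fin.eq_zero_or_eq_succ p with rfl | ⟨p', rfl⟩ <;>
        rcases Fin.eq_zero_or_eq_succ q with rfl | ⟨q', rfl⟩
      · exact absurd rfl hpq
      · simp only [Fin.cases_zero, Fin.cases_succ] at hmem
        exact ⟨q', hmem⟩
      · simp only [Fin.cases_zero, Fin.cases_succ] at hmem
        rw [inf_comm] at hmem
        exact ⟨p', hmem⟩
      · exfalso
        have hne : p' ≠ q' := fun h => hpq (congrArg Fin.succ h)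
        simp only [Fin.cases_succ] at hmem
        exact hdd p' q' hne hmem
    -- closure under meets
    have hmeets : ∀ (i : Fin (n + 1)) (x y : L), x ⊓ d i ∈ F → y ⊓ d i ∈ F →
        (x ⊓ y) ⊓ d i ∈ F := by
      intro i x y hx hy
      set a : Fin (n + 2) → L :=
        Fin.cases (x ⊓ d i) (fun j => if j = i then y ⊓ d i else d j) with hadef
      have ha : ∀ j, a j ∈ F := by
        intro j
        rcases Fin.eq_zero_or_eq_succ j with rfl | ⟨l, rfl⟩
        · simp only [hadef, Fin.cases_zero]; exact hx
        · simp only [hadef, Fin.cases_succ]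
          by_cases hl : l = i
          · rw [if_pos hl]; exact hy
          · rw [if_neg hl]; exact hdF l
      obtain ⟨p, q, hpq, hmem⟩ := hL1 a ha
      rcases Fin.eq_zero_or_eq_succ p with rfl | ⟨p', rfl⟩ <;>
        rcases Fin.eq_zero_or_eq_succ q with rfl | ⟨q', rfl⟩
      · exact absurd rfl hpq
      · simp only [hadef, Fin.cases_zero, Fin.cases_succ] at hmem
        by_cases hq : q' = i
        · rw [if_pos hq] at hmem
          exact hF hmem (le_inf (le_inf (inf_le_left.trans inf_le_left)
            (inf_le_right.trans inf_le_left)) (inf_le_left.trans inf_le_right))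
        · rw [if_neg hq] at hmem
          exact absurd (hF hmem (inf_le_inf_right _ inf_le_right)) (hdd i q' (Ne.symm hq))
      · simp only [hadef, Fin.cases_zero, Fin.cases_succ] at hmem
        by_cases hp' : p' = i
        · rw [if_pos hp'] at hmem
          exact hF hmem (le_inf (le_inf (inf_le_right.trans inf_le_left)
            (inf_le_left.trans inf_le_left)) (inf_le_left.trans inf_le_right))
        · rw [if_neg hp'] at hmem
          exact absurd (hF hmem (inf_le_inf_left _ inf_le_right)) (hdd p' i hp')
      · have hne : p' ≠ q' := fun h => hpq (congrArg Fin.succ h)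
        simp only [hadef, Fin.cases_succ] at hmem
        by_cases hp' : p' = i <;> by_cases hq' : q' = i
        · exact absurd (hp'.trans hq'.symm) hne
        · rw [if_pos hp', if_neg hq'] at hmem
          exact absurd (hF hmem (inf_le_inf_right _ inf_le_right)) (hdd i q' (Ne.symm hq'))
        · rw [if_neg hp', if_pos hq'] at hmem
          exact absurd (hF hmem (inf_le_inf_left _ inf_le_right)) (hdd p' i hp')
        · rw [if_neg hp', if_neg hq'] at hmem
          exact absurd hmem (hdd p' q' hne)
    -- assemble
    refine ⟨n + 1, by omega, le_rfl, fun i => {x | x ⊓ d i ∈ F},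
      fun i => ⟨⟨?_, ?_⟩, ?_, ?_, ?_⟩, ?_⟩
    · -- almost complete
      intro x hx y
      show (x ⊓ (y ⊔ ∼y)) ⊓ d i ∈ F
      have hx' : x ⊓ d i ∈ F := hx
      exact hF (hc.1 _ hx' y) (le_inf (le_inf (inf_le_left.trans inf_le_left) inf_le_right)
        (inf_le_left.trans inf_le_right))
    · -- nonempty
      refine ⟨d i, ?_⟩
      show d i ⊓ d i ∈ F
      simpa using hdF i
    · -- prime
      intro x y hxy
      have hxy' : (x ⊔ y) ⊓ d i ∈ F := hxy
      rw [inf_sup_right] at hxy'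
      rcases hp _ _ hxy' with h | h
      · exact Or.inl h
      · exact Or.inr h
    · -- upset
      intro x y hx hxy
      exact hF hx (inf_le_inf_right _ hxy)
    · -- meets
      intro x y hx hy
      exact hmeets i x y hx hy
    · -- union
      ext x
      simp only [Set.mem_iUnion, Set.mem_setOf_eq]
      constructor
      · intro hx
        exact hcover x hx
      · rintro ⟨i, hi⟩
        exact hF hi inf_le_left

/-- complete prime `n`-filters are precisely unions of at most `n`
complete prime filters. -/
theorem statement1 {L : Type*} [DeMorgan L] [Nonempty L] (n : ℕ) (hn : 1 ≤ n)
    (F : Set L) (hF : IsUpset F) :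
    (IsCompleteUpset F ∧ IsPrimeUpset F ∧ IsNFilter n F) ↔
      ∃ k : ℕ, 1 ≤ k ∧ k ≤ n ∧ ∃ G : Fin k → Set L,
        (∀ i : Fin k, IsCompleteUpset (G i) ∧ IsPrimeUpset (G i) ∧ IsLatFilter (G i)) ∧
        F = ⋃ i : Fin k, G i := by
  constructor
  · rintro ⟨hc, hp, hnf⟩
    exact forward_statement n hn F hF hc hp hnf
  · rintro ⟨k, hk1, hkn, G, hG, rfl⟩
    haveI hFinNe : Nonempty (Fin k) := ⟨⟨0, hk1⟩⟩
    refine ⟨⟨?_, ?_⟩, ?_, hF, ?_⟩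
    · -- almost complete
      intro x hx y
      rw [Set.mem_iUnion] at hx ⊢
      obtain ⟨i, hi⟩ := hx
      exact ⟨i, (hG i).1.1 x hi y⟩
    · -- nonempty
      obtain ⟨i⟩ := hFinNe
      obtain ⟨x, hx⟩ := (hG i).1.2
      exact ⟨x, Set.mem_iUnion.mpr ⟨i, hx⟩⟩
    · -- prime
      intro x y hxy
      rw [Set.mem_iUnion] at hxy
      obtain ⟨i, hi⟩ := hxy
      rcases (hG i).2.1 x y hi with h | h
      · exact Or.inl (Set.mem_iUnion.mpr ⟨i, h⟩)
      · exact Or.inr (Set.mem_iUnion.mpr ⟨i, h⟩)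
    · -- n-filter condition
      intro Y hY hyp
      classical
      have hsub : ∃ i : Fin k, ∀ y ∈ Y, y ∈ G i := by
        by_contra hcon
        push_neg at hcon
        choose f hf1 hf2 using hcon
        have hXne : (Finset.univ.image f).Nonempty := Finset.univ_nonempty.image f
        have hXsub : Finset.univ.image f ⊆ Y := by
          intro z hz
          obtain ⟨i, -, rfl⟩ := Finset.mem_image.mp hz
          exact hf1 i
        have hXcard : (Finset.univ.image f).card ≤ n := by
          refine le_trans Finset.card_image_le ?_
          rw [Finset.card_univ, Fintype.card_fin]
          exact hkn
        have hmem := hyp _ hXne hXsub hXcard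
        rw [Set.mem_iUnion] at hmem
        obtain ⟨i, hi⟩ := hmem
        have hle : (Finset.univ.image f).inf' hXne id ≤ f i :=
          (Finset.inf'_le id (Finset.mem_image_of_mem f (Finset.mem_univ i)) :
            (Finset.univ.image f).inf' _ id ≤ id (f i))
        exact hf2 i ((hG i).2.2.1 hi hle)
      obtain ⟨i, hi⟩ := hsub
      exact Set.mem_iUnion.mpr ⟨i, filter_inf'_mem (hG i).2.2 Y hY hi⟩
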